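/- arXiv:2403.10311 — 2 statements merged into one kernel-verified Lean document; each statement's English description precedes it below -/
import Mathlib

section
/- An element a of a chirotope χ on X is extreme if and only if there exists y' ∈ X\{a} such that χ(a,y',z) = −1 for all z ∈ X\{a,y'}. Moreover, when a is extreme, both the witness y with χ(a,y,z)=1 for all z and the witness y' with χ(a,y',z)=−1 for all z are unique. -/
/-- A sign function: defined on triples of pairwise distinct elements, with
values in `{-1, +1}`, alternating under permutations of the arguments. -/
def SignFn {X : Type*} (χ : X → X → X → ℤ) : Prop :=
  ∀ x y z : X, x ≠ y → y ≠ z → x ≠ z →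
    (χ x y z = 1 ∨ χ x y z = -1) ∧ χ x y z = χ y z x ∧ χ x y z = -χ y x z

/-- The interiority axiom of chirotopes. -/
def Interiority {X : Type*} (χ : X → X → X → ℤ) : Prop :=
  ∀ t x y z : X, t ≠ x → t ≠ y → t ≠ z → x ≠ y → x ≠ z → y ≠ z →
    χ t y z = 1 → χ x t z = 1 → χ x y t = 1 → χ x y z = 1

/-- The transitivity axiom of chirotopes. -/
def Transitivity {X : Type*} (χ : X → X → X → ℤ) : Prop :=
  ∀ s t x y z : X, s ≠ t → s ≠ x → s ≠ y → s ≠ z → t ≠ x → t ≠ y → t ≠ z →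
      x ≠ y → x ≠ z → y ≠ z →
    χ t s x = 1 → χ t s y = 1 → χ t s z = 1 → χ x y t = 1 → χ y z t = 1 →
      χ x z t = 1

/-- A chirotope: a sign function satisfying interiority and transitivity. -/
def Chirotope {X : Type*} (χ : X → X → X → ℤ) : Prop :=
  SignFn χ ∧ Interiority χ ∧ Transitivity χ

/-- `x` is extreme in `χ`: there is `y ≠ x` such that `χ x y z` takes the same
value for all `z ∉ {x, y}`. -/
def ExtremeIn {X : Type*} (χ : X → X → X → ℤ) (x : X) : Prop :=
  ∃ y, y ≠ x ∧ ∃ c : ℤ, ∀ z, z ≠ x → z ≠ y → χ x y z = c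


section Aux

variable {X : Type*} {χ : X → X → X → ℤ}

lemma sgn_cyc (h : SignFn χ) {x y z : X} (hxy : x ≠ y) (hyz : y ≠ z) (hxz : x ≠ z) :
    χ x y z = χ y z x := (h x y z hxy hyz hxz).2.1

lemma sgn_swap12 (h : SignFn χ) {x y z : X} (hxy : x ≠ y) (hyz : y ≠ z) (hxz : x ≠ z) :
    χ x y z = -χ y x z := (h x y z hxy hyz hxz).2.2

lemma sgn_vals (h : SignFn χ) {x y z : X} (hxy : x ≠ y) (hyz : y ≠ z) (hxz : x ≠ z) :
    χ x y z = 1 ∨ χ x y z = -1 := (h x y z hxy hyz hxz).1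

lemma sgn_swap23 (h : SignFn χ) {x y z : X} (hxy : x ≠ y) (hyz : y ≠ z) (hxz : x ≠ z) :
    χ x y z = -χ x z y := by
  have h1 := sgn_cyc h hxy hyz hxz
  have h2 := sgn_swap12 h hyz hxz.symm hxy.symm
  have h3 := sgn_cyc h hxz hyz.symm hxy
  omega

/-- Key step: under a `≺ₜ`-cycle setup, one positive consecutive pair at `s`
propagates to the next. -/
lemma chi_step (hχ : Chirotope χ) {s t x y z : X}
    (hst : s ≠ t) (hsx : s ≠ x) (hsy : s ≠ y) (hsz : s ≠ z)
    (htx : t ≠ x) (hty : t ≠ y) (htz : t ≠ z)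
    (hxy : x ≠ y) (hxz : x ≠ z) (hyz : y ≠ z)
    (hC1 : χ x y t = 1) (hC3 : χ z x t = 1) (hD : χ x y z = 1)
    (hSx : χ s t x = 1) (hP : χ x y s = 1) : χ z x s = 1 := by
  obtain ⟨hsgn, hint, htr⟩ := hχ
  have htzx : χ t z x = 1 := by
    have e1 := sgn_cyc hsgn hxz.symm htx.symm htz.symm  -- χ z x t = χ x t z
    have e2 := sgn_cyc hsgn htx.symm htz hxz            -- χ x t z = χ t z x
    omega
  have hres : χ s z x = 1 :=
    htr y x s t z hxy.symm hsy.symm hty.symm hyz hsx.symm htx.symm hxz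
      hst hsz htz hP hC1 hD hSx htzx
  have e3 := sgn_cyc hsgn hsz hxz.symm hsx  -- χ s z x = χ z x s
  omega

/-- Reverse transitivity: transitivity also holds on the negative side of
the pencil through `s, t`. -/
lemma transitivity_rev (hχ : Chirotope χ) {s t x y z : X}
    (hst : s ≠ t) (hsx : s ≠ x) (hsy : s ≠ y) (hsz : s ≠ z)
    (htx : t ≠ x) (hty : t ≠ y) (htz : t ≠ z)
    (hxy : x ≠ y) (hxz : x ≠ z) (hyz : y ≠ z)
    (hx : χ s t x = 1) (hy : χ s t y = 1) (hz : χ s t z = 1)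
    (hxyt : χ x y t = 1) (hyzt : χ y z t = 1) : χ x z t = 1 := by
  obtain ⟨hsgn, hint, htr⟩ := hχ
  rcases sgn_vals hsgn hxz htz.symm htx.symm with hgood | hbad
  · exact hgood
  have hzx : χ z x t = 1 := by
    have := sgn_swap12 hsgn hxz htz.symm htx.symm
    omega
  -- derive χ x y z = 1 from interiority
  have hD : χ x y z = 1 := by
    have e1 : χ t y z = 1 := by
      have a1 := sgn_cyc hsgn hyz htz.symm hty.symm  -- χ y z t = χ z t y
      have a2 := sgn_cyc hsgn htz.symm hty hyz.symm  -- χ z t y = χ t y z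
      omega
    have e2 : χ x t z = 1 := by
      have a1 := sgn_cyc hsgn hxz.symm htx.symm htz.symm  -- χ z x t = χ x t z
      omega
    exact hint t x y z htx hty htz hxy hxz hyz e1 e2 hxyt
  have hD2 : χ y z x = 1 := by
    have := sgn_cyc hsgn hxy hyz hxz; omega
  have hD3 : χ z x y = 1 := by
    have := sgn_cyc hsgn hyz hxz.symm hxy.symm; omega
  -- the chirotope on pairs at s
  rcases sgn_vals hsgn hxy hsy.symm hsx.symm with hP | hP
  · have q1 : χ z x s = 1 := chi_step ⟨hsgn, hint, htr⟩ hst hsx hsy hsz htx hty htz hxy hxz hyz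
      hxyt hzx hD hx hP
    have q2 : χ y z s = 1 := chi_step ⟨hsgn, hint, htr⟩ hst hsz hsx hsy htz htx hty
      hxz.symm hyz.symm hxy hzx hyzt hD3 hz q1
    have q3 : χ x z s = 1 := htr t s x y z hst.symm htx hty htz hsx hsy hsz hxy hxz hyz
      hx hy hz hP q2
    have := sgn_swap12 hsgn hxz hsz.symm hsx.symm
    omega
  · rcases sgn_vals hsgn hyz hsz.symm hsy.symm with hQ | hQ
    · have q1 : χ x y s = 1 := chi_step ⟨hsgn, hint, htr⟩ hst hsy hsz hsx hty htz htx
        hyz hxy.symm hxz.symm hyzt hxyt hD2 hy hQ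
      omega
    · rcases sgn_vals hsgn hxz.symm hsx.symm hsz.symm with hR | hR
      · have q1 : χ y z s = 1 := chi_step ⟨hsgn, hint, htr⟩ hst hsz hsx hsy htz htx hty
          hxz.symm hyz.symm hxy hzx hyzt hD3 hz hR
        omega
      · have hzy : χ z y s = 1 := by
          have := sgn_swap12 hsgn hyz hsz.symm hsy.symm; omega
        have hyx : χ y x s = 1 := by
          have := sgn_swap12 hsgn hxy hsy.symm hsx.symm; omega
        have q : χ z x s = 1 := htr t s z y x hst.symm htz hty htx hsz hsy hsx
          hyz.symm hxz.symm hxy.symm hz hy hx hzy hyx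
        omega

/-- The orientation-reversed chirotope is a chirotope. -/
lemma chirotope_op (hχ : Chirotope χ) : Chirotope (fun x y z => χ x z y) := by
  obtain ⟨hsgn, hint, htr⟩ := hχ
  refine ⟨?_, ?_, ?_⟩
  · intro x y z hxy hyz hxz
    refine ⟨sgn_vals hsgn hxz hyz.symm hxy, ?_, ?_⟩
    · -- χ x z y = χ y x z
      show χ x z y = χ y x z
      have h1 := sgn_swap12 hsgn hxy hyz hxz
      have h2 := sgn_swap23 hsgn hxy hyz hxz
      omega
    · -- χ x z y = -χ y z x
      show χ x z y = -χ y z x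
      have h1 := sgn_cyc hsgn hxy hyz hxz
      have h2 := sgn_swap23 hsgn hxy hyz hxz
      omega
  · intro t x y z htx hty htz hxy hxz hyz h1 h2 h3
    exact hint t x z y htx htz hty hxz hxy hyz.symm h1 h3 h2
  · intro s t x y z hst hsx hsy hsz htx hty htz hxy hxz hyz h1 h2 h3 h4 h5
    show χ x t z = 1
    have h1 : χ t x s = 1 := h1
    have h2 : χ t y s = 1 := h2
    have h3 : χ t z s = 1 := h3
    have h4 : χ x t y = 1 := h4
    have h5 : χ y t z = 1 := h5
    have hx' : χ s t x = 1 := by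
      have a1 := sgn_cyc hsgn htx hsx.symm hst.symm  -- χ t x s = χ x s t
      have a2 := sgn_cyc hsgn hsx.symm hst htx.symm  -- χ x s t = χ s t x
      omega
    have hy' : χ s t y = 1 := by
      have a1 := sgn_cyc hsgn hty hsy.symm hst.symm
      have a2 := sgn_cyc hsgn hsy.symm hst hty.symm
      omega
    have hz' : χ s t z = 1 := by
      have a1 := sgn_cyc hsgn htz hsz.symm hst.symm
      have a2 := sgn_cyc hsgn hsz.symm hst htz.symm
      omega
    have hzy : χ z y t = 1 := by
      have a1 := sgn_cyc hsgn hty.symm htz hyz       -- χ y t z = χ t z y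
      have a2 := sgn_cyc hsgn htz hyz.symm hty       -- χ t z y = χ z y t
      omega
    have hyx : χ y x t = 1 := by
      have a1 := sgn_cyc hsgn htx.symm hty hxy       -- χ x t y = χ t y x
      have a2 := sgn_cyc hsgn hty hxy.symm htx       -- χ t y x = χ y x t
      omega
    have q : χ z x t = 1 := transitivity_rev ⟨hsgn, hint, htr⟩ hst hsz hsy hsx
      htz hty htx hyz.symm hxz.symm hxy.symm hz' hy' hx' hzy hyx
    have a1 := sgn_cyc hsgn htx.symm htz hxz         -- χ x t z = χ t z x
    have a2 := sgn_cyc hsgn htz hxz.symm htx         -- χ t z x = χ z x t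
    omega

/-- If `a` has a positive witness, it has a negative witness. -/
lemma source_to_sink {X : Type*} [Fintype X] {χ : X → X → X → ℤ} (hχ : Chirotope χ)
    (hcard : 3 ≤ Fintype.card X) {a y : X} (hy : y ≠ a)
    (hall : ∀ z, z ≠ a → z ≠ y → χ a y z = 1) :
    ∃ y', y' ≠ a ∧ ∀ z, z ≠ a → z ≠ y' → χ a y' z = -1 := by
  classical
  obtain ⟨hsgn, hint, htr⟩ := hχ
  set S : Finset X := Finset.univ.filter (fun z => z ≠ a ∧ z ≠ y) with hSdef
  have hmemS : ∀ {z : X}, z ∈ S ↔ z ≠ a ∧ z ≠ y := by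
    intro z; simp [hSdef]
  have hSne : S.Nonempty := by
    by_contra h
    have hforall : ∀ z : X, z = a ∨ z = y := by
      intro z
      by_contra hz
      push_neg at hz
      exact h ⟨z, hmemS.mpr ⟨hz.1, hz.2⟩⟩
    have hsub : (Finset.univ : Finset X) ⊆ {a, y} := by
      intro z _
      rcases hforall z with rfl | rfl <;> simp
    have h2 : Fintype.card X ≤ ({a, y} : Finset X).card := by
      rw [← Finset.card_univ]; exact Finset.card_le_card hsub
    have h3 : ({a, y} : Finset X).card ≤ 2 :=
      (Finset.card_insert_le _ _).trans (by simp)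
    omega
  -- predecessors in the order χ · · a
  set preds : X → Finset X := fun u => S.filter (fun v => v ≠ u ∧ χ v u a = 1) with hpreds
  obtain ⟨m, hmS, hmax⟩ := S.exists_max_image (fun u => (preds u).card) hSne
  obtain ⟨hma, hmy⟩ := hmemS.mp hmS
  have hm : ∀ u ∈ S, u ≠ m → χ u m a = 1 := by
    intro u huS hum
    obtain ⟨hua, huy⟩ := hmemS.mp huS
    by_contra hne
    have hval : χ u m a = -1 := ((sgn_vals hsgn hum hma hua).resolve_left hne)
    have hmu : χ m u a = 1 := by
      have := sgn_swap12 hsgn hum hma hua; omega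
    have hsub : insert m (preds m) ⊆ preds u := by
      intro v hv
      rcases Finset.mem_insert.mp hv with rfl | hv
      · exact Finset.mem_filter.mpr ⟨hmS, hum.symm, hmu⟩
      · obtain ⟨hvS, hvm, hvma⟩ := Finset.mem_filter.mp hv
        obtain ⟨hva, hvy⟩ := hmemS.mp hvS
        have hvu : v ≠ u := by
          rintro rfl; exact hne hvma
        have htrans : χ v u a = 1 :=
          htr y a v m u hy hvy.symm hmy.symm huy.symm hva.symm hma.symm hua.symm
            hvm hvu hum.symm (hall v hva hvy) (hall m hma hmy) (hall u hua huy)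
            hvma hmu
        exact Finset.mem_filter.mpr ⟨hvS, hvu, htrans⟩
    have hnotmem : m ∉ preds m := by
      intro hmem
      exact (Finset.mem_filter.mp hmem).2.1 rfl
    have hlt : (preds m).card < (preds u).card := by
      have h1 : (insert m (preds m)).card ≤ (preds u).card := Finset.card_le_card hsub
      rw [Finset.card_insert_of_notMem hnotmem] at h1
      omega
    exact absurd (hmax u huS) (not_le.mpr hlt)
  refine ⟨m, hma, ?_⟩
  intro z hza hzm
  by_cases hzy : z = y
  · subst hzy
    have h1 : χ a z m = 1 := hall m hma hmy
    have h2 := sgn_swap23 hsgn hza.symm hzm hma.symm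
    -- h2 : χ a z m = -χ a m z
    omega
  · have hzS : z ∈ S := hmemS.mpr ⟨hza, hzy⟩
    have h1 : χ z m a = 1 := hm z hzS hzm
    have h2 := sgn_cyc hsgn hzm hma hza  -- χ z m a = χ m a z
    have h3 := sgn_cyc hsgn hma hza.symm hzm.symm  -- wrong? χ m a z = χ a z m
    have h4 := sgn_swap23 hsgn hza.symm hzm hma.symm  -- χ a z m = -χ a m z
    omega

end Aux

/-- `a` is extreme in a chirotope `χ` (i.e. there is `y ≠ a`
with `χ a y z = 1` for all `z ∉ {a, y}`) iff there is `y' ≠ a` with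
`χ a y' z = -1` for all `z ∉ {a, y'}`; moreover both witnesses are unique
when `a` is extreme. -/
theorem extreme_iff_neg_witness_and_uniqueness
    {X : Type*} [Fintype X] (χ : X → X → X → ℤ) (hχ : Chirotope χ)
    (hcard : 3 ≤ Fintype.card X) (a : X) :
    ((∃ y, y ≠ a ∧ ∀ z, z ≠ a → z ≠ y → χ a y z = 1) ↔
      (∃ y', y' ≠ a ∧ ∀ z, z ≠ a → z ≠ y' → χ a y' z = -1)) ∧
    ((∃ y, y ≠ a ∧ ∀ z, z ≠ a → z ≠ y → χ a y z = 1) →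
      (∃! y, y ≠ a ∧ ∀ z, z ≠ a → z ≠ y → χ a y z = 1) ∧
      (∃! y', y' ≠ a ∧ ∀ z, z ≠ a → z ≠ y' → χ a y' z = -1)) := by
  obtain ⟨hsgn, hint, htr⟩ := hχ
  have hχ' : Chirotope χ := ⟨hsgn, hint, htr⟩
  have fwd : (∃ y, y ≠ a ∧ ∀ z, z ≠ a → z ≠ y → χ a y z = 1) →
      (∃ y', y' ≠ a ∧ ∀ z, z ≠ a → z ≠ y' → χ a y' z = -1) := by
    rintro ⟨y, hy, hall⟩
    exact source_to_sink hχ' hcard hy hall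
  have bwd : (∃ y', y' ≠ a ∧ ∀ z, z ≠ a → z ≠ y' → χ a y' z = -1) →
      (∃ y, y ≠ a ∧ ∀ z, z ≠ a → z ≠ y → χ a y z = 1) := by
    rintro ⟨y', hy', hall⟩
    have hop : Chirotope (fun x y z => χ x z y) := chirotope_op hχ'
    have hall' : ∀ z, z ≠ a → z ≠ y' → (fun x y z => χ x z y) a y' z = 1 := by
      intro z hza hzy'
      show χ a z y' = 1
      have h1 := hall z hza hzy'
      have h2 := sgn_swap23 hsgn hy'.symm hzy'.symm hza.symm
      omega
    obtain ⟨y'', hy'', hall''⟩ := source_to_sink hop hcard hy' hall'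
    refine ⟨y'', hy'', ?_⟩
    intro z hza hzy
    have h1 : χ a z y'' = -1 := hall'' z hza hzy
    have h2 := sgn_swap23 hsgn hy''.symm hzy.symm hza.symm
    omega
  refine ⟨⟨fwd, bwd⟩, ?_⟩
  rintro ⟨y, hy, hall⟩
  obtain ⟨y', hy', hall'⟩ := fwd ⟨y, hy, hall⟩
  constructor
  · refine ⟨y, ⟨hy, hall⟩, ?_⟩
    rintro y₂ ⟨hy₂, hall₂⟩
    by_contra hne
    have h1 : χ a y₂ y = 1 := hall₂ y hy (fun h => hne h.symm)
    have h2 : χ a y y₂ = 1 := hall y₂ hy₂ hne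
    have h3 := sgn_swap23 hsgn hy.symm (fun h => hne h.symm) hy₂.symm
    omega
  · refine ⟨y', ⟨hy', hall'⟩, ?_⟩
    rintro y₂ ⟨hy₂, hall₂⟩
    by_contra hne
    have h1 : χ a y₂ y' = -1 := hall₂ y' hy' (fun h => hne h.symm)
    have h2 : χ a y' y₂ = -1 := hall' y₂ hy₂ hne
    have h3 := sgn_swap23 hsgn hy'.symm (fun h => hne h.symm) hy₂.symm
    omega
end

section
/- Let χ be a chirotope with a nontrivial bowtie decomposition χ = κ ⋈_{x*,y*} ξ (so all non-starred ground sets have size at least 2, and x*, y* are extreme in κ, ξ). Then χ is convex (all elements extreme) if and only if both κ and ξ are convex. -/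
/-- A sign function on the (finite) ground set `S`: defined on triples of
pairwise distinct elements of `S`, with values in `{-1, +1}`, alternating
under permutations of the arguments. -/
def SignFnOn {T : Type*} (χ : T → T → T → ℤ) (S : Finset T) : Prop :=
  ∀ x ∈ S, ∀ y ∈ S, ∀ z ∈ S, x ≠ y → y ≠ z → x ≠ z →
    (χ x y z = 1 ∨ χ x y z = -1) ∧ χ x y z = χ y z x ∧ χ x y z = -χ y x z

/-- The interiority axiom on the ground set `S`. -/
def InteriorityOn {T : Type*} (χ : T → T → T → ℤ) (S : Finset T) : Prop :=
  ∀ t ∈ S, ∀ x ∈ S, ∀ y ∈ S, ∀ z ∈ S,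
    t ≠ x → t ≠ y → t ≠ z → x ≠ y → x ≠ z → y ≠ z →
    χ t y z = 1 → χ x t z = 1 → χ x y t = 1 → χ x y z = 1

/-- The transitivity axiom on the ground set `S`. -/
def TransitivityOn {T : Type*} (χ : T → T → T → ℤ) (S : Finset T) : Prop :=
  ∀ s ∈ S, ∀ t ∈ S, ∀ x ∈ S, ∀ y ∈ S, ∀ z ∈ S,
    s ≠ t → s ≠ x → s ≠ y → s ≠ z → t ≠ x → t ≠ y → t ≠ z →
    x ≠ y → x ≠ z → y ≠ z →
    χ t s x = 1 → χ t s y = 1 → χ t s z = 1 → χ x y t = 1 → χ y z t = 1 →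
    χ x z t = 1

/-- A chirotope on the ground set `S`. -/
def ChirotopeOn {T : Type*} (χ : T → T → T → ℤ) (S : Finset T) : Prop :=
  SignFnOn χ S ∧ InteriorityOn χ S ∧ TransitivityOn χ S

/-- `x` is extreme in the chirotope `χ` on ground set `S`: `x ∈ S` and there is
`y ∈ S \ {x}` such that `χ x y z` takes the same value for all
`z ∈ S \ {x, y}`. -/
def ExtremeInOn {T : Type*} (χ : T → T → T → ℤ) (S : Finset T) (x : T) : Prop :=
  x ∈ S ∧ ∃ y ∈ S, y ≠ x ∧ ∃ c : ℤ, ∀ z ∈ S, z ≠ x → z ≠ y → χ x y z = c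

/-- Replace every element outside `S` by the proxy `p`. -/
def projTo {T : Type*} [DecidableEq T] (S : Finset T) (p : T) (u : T) : T :=
  if u ∈ S then u else p

/-- The bowtie `χ ⋈_{xs, ys} ξ` of a sign function `χ` on `X ∪ {xs}` and a sign
function `ξ` on `Y ∪ {ys}`: on a triple of elements of `X ∪ Y`, if the majority
of the elements lies in `X` use `χ`, replacing the (possible) element of `Y` by
the proxy `xs`; otherwise use `ξ`, replacing the (possible) element of `X` by
the proxy `ys`.  This agrees with the definition on the four distinguished
kinds of triples, extended by the symmetry condition. -/
def bowtie {T : Type*} [DecidableEq T] (χ : T → T → T → ℤ) (X : Finset T)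
    (xs : T) (ξ : T → T → T → ℤ) (Y : Finset T) (ys : T) : T → T → T → ℤ :=
  fun u v w =>
    if 2 ≤ ((if u ∈ X then 1 else 0) + (if v ∈ X then 1 else 0) +
        (if w ∈ X then 1 else 0) : ℕ) then
      χ (projTo X xs u) (projTo X xs v) (projTo X xs w)
    else
      ξ (projTo Y ys u) (projTo Y ys v) (projTo Y ys w)

/-- A chirotope on ground set `S` is convex if all elements of `S` are
extreme. -/
def ConvexChirotopeOn {T : Type*} (χ : T → T → T → ℤ) (S : Finset T) : Prop :=
  ∀ x ∈ S, ExtremeInOn χ S x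

section Helpers
variable {T : Type*} {χ : T → T → T → ℤ} {S : Finset T} {u v w : T}

lemma sgn_pm (h : SignFnOn χ S) (hu : u ∈ S) (hv : v ∈ S) (hw : w ∈ S)
    (huv : u ≠ v) (hvw : v ≠ w) (huw : u ≠ w) : χ u v w = 1 ∨ χ u v w = -1 :=
  (h u hu v hv w hw huv hvw huw).1

lemma sgn_rot (h : SignFnOn χ S) (hu : u ∈ S) (hv : v ∈ S) (hw : w ∈ S)
    (huv : u ≠ v) (hvw : v ≠ w) (huw : u ≠ w) : χ u v w = χ v w u :=
  (h u hu v hv w hw huv hvw huw).2.1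

lemma sgn_swap12_s10 (h : SignFnOn χ S) (hu : u ∈ S) (hv : v ∈ S) (hw : w ∈ S)
    (huv : u ≠ v) (hvw : v ≠ w) (huw : u ≠ w) : χ u v w = -χ v u w :=
  (h u hu v hv w hw huv hvw huw).2.2

lemma sgn_rot2 (h : SignFnOn χ S) (hu : u ∈ S) (hv : v ∈ S) (hw : w ∈ S)
    (huv : u ≠ v) (hvw : v ≠ w) (huw : u ≠ w) : χ u v w = χ w u v := by
  rw [sgn_rot h hu hv hw huv hvw huw, sgn_rot h hv hw hu hvw huw.symm huv.symm]

lemma sgn_swap23_s10 (h : SignFnOn χ S) (hu : u ∈ S) (hv : v ∈ S) (hw : w ∈ S)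
    (huv : u ≠ v) (hvw : v ≠ w) (huw : u ≠ w) : χ u v w = -χ u w v := by
  rw [sgn_rot2 h hu hv hw huv hvw huw, sgn_swap12_s10 h hw hu hv huw.symm huv hvw.symm]

lemma sgn_swap13 (h : SignFnOn χ S) (hu : u ∈ S) (hv : v ∈ S) (hw : w ∈ S)
    (huv : u ≠ v) (hvw : v ≠ w) (huw : u ≠ w) : χ u v w = -χ w v u := by
  rw [sgn_rot h hu hv hw huv hvw huw, sgn_swap12_s10 h hv hw hu hvw huw.symm huv.symm]

end Helpers

section Bowtie
variable {T : Type*} [DecidableEq T] {κ ξ : T → T → T → ℤ} {X Y : Finset T} {xs ys u v w : T}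

lemma bowtie_XXX (hu : u ∈ X) (hv : v ∈ X) (hw : w ∈ X) :
    bowtie κ X xs ξ Y ys u v w = κ u v w := by
  simp [bowtie, projTo, hu, hv, hw]

lemma bowtie_XXY (hu : u ∈ X) (hv : v ∈ X) (hw : w ∉ X) :
    bowtie κ X xs ξ Y ys u v w = κ u v xs := by
  simp [bowtie, projTo, hu, hv, hw]

lemma bowtie_XYX (hu : u ∈ X) (hv : v ∉ X) (hw : w ∈ X) :
    bowtie κ X xs ξ Y ys u v w = κ u xs w := by
  simp [bowtie, projTo, hu, hv, hw]

lemma bowtie_YYY (hu : u ∉ X) (hv : v ∉ X) (hw : w ∉ X)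
    (hu' : u ∈ Y) (hv' : v ∈ Y) (hw' : w ∈ Y) :
    bowtie κ X xs ξ Y ys u v w = ξ u v w := by
  simp [bowtie, projTo, hu, hv, hw, hu', hv', hw']

lemma bowtie_YYX (hu : u ∉ X) (hv : v ∉ X) (hw : w ∈ X)
    (hu' : u ∈ Y) (hv' : v ∈ Y) (hw' : w ∉ Y) :
    bowtie κ X xs ξ Y ys u v w = ξ u v ys := by
  simp [bowtie, projTo, hu, hv, hw, hu', hv', hw']

lemma bowtie_YXY (hu : u ∉ X) (hv : v ∈ X) (hw : w ∉ X)
    (hu' : u ∈ Y) (hv' : v ∉ Y) (hw' : w ∈ Y) :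
    bowtie κ X xs ξ Y ys u v w = ξ u ys w := by
  simp [bowtie, projTo, hu, hv, hw, hu', hv', hw']

end Bowtie

lemma exists_rel_max {T : Type*} [DecidableEq T] (r : T → T → Prop) (A : Finset T)
    (hne : A.Nonempty)
    (htot : ∀ a ∈ A, ∀ b ∈ A, a ≠ b → r a b ∨ r b a)
    (htr : ∀ a ∈ A, ∀ b ∈ A, ∀ c ∈ A, a ≠ b → b ≠ c → a ≠ c → r a b → r b c → r a c) :
    ∃ m ∈ A, ∀ z ∈ A, z ≠ m → r z m := by
  classical
  revert hne htot htr
  induction A using Finset.induction_on with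
  | empty => intro hne _ _; exact absurd hne (by simp)
  | @insert a s ha ih =>
    intro hne htot htr
    by_cases hs : s.Nonempty
    · obtain ⟨m, hm, hmax⟩ := ih hs
        (fun x hx y hy hxy => htot x (Finset.mem_insert_of_mem hx) y (Finset.mem_insert_of_mem hy) hxy)
        (fun x hx y hy z hz h1 h2 h3 => htr x (Finset.mem_insert_of_mem hx) y
          (Finset.mem_insert_of_mem hy) z (Finset.mem_insert_of_mem hz) h1 h2 h3)
      have ham : a ≠ m := fun h => ha (h ▸ hm)
      rcases htot a (Finset.mem_insert_self a s) m (Finset.mem_insert_of_mem hm) ham with h | h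
      · refine ⟨m, Finset.mem_insert_of_mem hm, ?_⟩
        intro z hz hzm
        rcases Finset.mem_insert.mp hz with rfl | hz
        · exact h
        · exact hmax z hz hzm
      · refine ⟨a, Finset.mem_insert_self a s, ?_⟩
        intro z hz hza
        rcases Finset.mem_insert.mp hz with rfl | hz
        · exact absurd rfl hza
        · by_cases hzm : z = m
          · exact hzm ▸ h
          · exact htr z (Finset.mem_insert_of_mem hz) m (Finset.mem_insert_of_mem hm) a
              (Finset.mem_insert_self a s) hzm ham.symm hza (hmax z hz hzm) h
    · refine ⟨a, Finset.mem_insert_self a s, ?_⟩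
      intro z hz hza
      rcases Finset.mem_insert.mp hz with rfl | hz
      · exact absurd rfl hza
      · exact absurd ⟨z, hz⟩ hs

lemma noCycle {T : Type*} {χ : T → T → T → ℤ} {S : Finset T}
    (hχ : ChirotopeOn χ S) {x y a b c : T}
    (hxS : x ∈ S) (hyS : y ∈ S) (haS : a ∈ S) (hbS : b ∈ S) (hcS : c ∈ S)
    (hxy : x ≠ y) (hxa : x ≠ a) (hxb : x ≠ b) (hxc : x ≠ c)
    (hya : y ≠ a) (hyb : y ≠ b) (hyc : y ≠ c)
    (hab : a ≠ b) (hac : a ≠ c) (hbc : b ≠ c)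
    (h1 : χ y x a = 1) (h2 : χ y x b = 1) (h3 : χ y x c = 1)
    (h4 : χ a b x = 1) (h5 : χ b c x = 1) (h6 : χ c a x = 1) : False := by
  obtain ⟨hs, hint, htr⟩ := hχ
  have e1 : χ x b c = 1 := by
    rw [← sgn_rot2 hs hbS hcS hxS hbc hxc.symm hxb.symm]; exact h5
  have e2 : χ a x c = 1 := by
    rw [← sgn_rot hs hcS haS hxS hac.symm hxa.symm hxc.symm]; exact h6
  have habc : χ a b c = 1 :=
    hint x hxS a haS b hbS c hcS hxa hxb hxc hab hac hbc e1 e2 h4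
  have hp := sgn_pm hs haS hbS hyS hab hyb.symm hya.symm
  have hq := sgn_pm hs hbS hcS hyS hbc hyc.symm hyb.symm
  have hr := sgn_pm hs haS hcS hyS hac hyc.symm hya.symm
  -- closers
  have T1 : χ a b y = 1 → χ a c y = 1 → False := by
    intro p r
    have p4 : χ x c a = 1 := by
      rw [← sgn_rot2 hs hcS haS hxS hac.symm hxa.symm hxc.symm]; exact h6
    have p5 : χ c y a = 1 := by
      rw [← sgn_rot hs haS hcS hyS hac hyc.symm hya.symm]; exact r
    have concl : χ x y a = 1 :=
      htr b hbS a haS x hxS c hcS y hyS hab.symm hxb.symm hbc hyb.symm hxa.symm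
        hac hya.symm hxc hxy hyc.symm h4 habc p p4 p5
    have hsw := sgn_swap12_s10 hs hyS hxS haS hxy.symm hxa hya
    linarith
  have T2 : χ a b y = 1 → χ b c y = 1 → χ a c y = -1 → False := by
    intro p q r
    have concl : χ a c y = 1 :=
      htr x hxS y hyS a haS b hbS c hcS hxy hxa hxb hxc hya hyb hyc hab hac hbc
        h1 h2 h3 p q
    linarith
  have T3 : χ b c y = -1 → χ a c y = -1 → False := by
    intro q r
    have p2 : χ c a b = 1 := by
      rw [← sgn_rot2 hs haS hbS hcS hab hbc hac]; exact habc
    have p3 : χ c a y = 1 := by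
      have hh := sgn_swap12_s10 hs haS hcS hyS hac hyc.symm hya.symm
      linarith
    have p5 : χ b y c = 1 := by
      have hh := sgn_swap23_s10 hs hbS hcS hyS hbc hyc.symm hyb.symm
      linarith
    have concl : χ x y c = 1 :=
      htr a haS c hcS x hxS b hbS y hyS hac hxa.symm hab hya.symm hxc.symm
        hbc.symm hyc.symm hxb hxy hyb.symm h6 p2 p3 e1 p5
    have hsw := sgn_swap12_s10 hs hyS hxS hcS hxy.symm hxc hyc
    linarith
  have T4 : χ a b y = -1 → χ b c y = 1 → False := by
    intro p q
    have p2 : χ b c a = 1 := by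
      rw [← sgn_rot hs haS hbS hcS hab hbc hac]; exact habc
    have p4 : χ x a b = 1 := by
      rw [← sgn_rot2 hs haS hbS hxS hab hxb.symm hxa.symm]; exact h4
    have p5 : χ a y b = 1 := by
      have hh := sgn_swap23_s10 hs haS hbS hyS hab hyb.symm hya.symm
      linarith
    have concl : χ x y b = 1 :=
      htr c hcS b hbS x hxS a haS y hyS hbc.symm hxc.symm hac.symm hyc.symm
        hxb.symm hab.symm hyb.symm hxa hxy hya.symm h5 p2 q p4 p5
    have hsw := sgn_swap12_s10 hs hyS hxS hbS hxy.symm hxb hyb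
    linarith
  have I2 : χ a b y = -1 → χ b c y = -1 → χ a c y = 1 → False := by
    intro p q r
    have p1 : χ y c b = 1 := by
      have hh := sgn_swap13 hs hbS hcS hyS hbc hyc.symm hyb.symm
      linarith
    have p2 : χ a y b = 1 := by
      have hh := sgn_swap23_s10 hs haS hbS hyS hab hyb.symm hya.symm
      linarith
    have concl : χ a c b = 1 :=
      hint y hyS a haS c hcS b hbS hya hyc hyb hac hab hbc.symm p1 p2 r
    have hh := sgn_swap23_s10 hs haS hbS hcS hab hbc hac
    linarith
  rcases hp with hp | hp
  · rcases hr with hr | hr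
    · exact T1 hp hr
    · rcases hq with hq | hq
      · exact T2 hp hq hr
      · exact T3 hq hr
  · rcases hq with hq | hq
    · exact T4 hp hq
    · rcases hr with hr | hr
      · exact I2 hp hq hr
      · exact T3 hq hr

lemma other_witness {T : Type*} [DecidableEq T] {χ : T → T → T → ℤ} {S : Finset T}
    (hχ : ChirotopeOn χ S) {x y : T} (hx : x ∈ S) (hy : y ∈ S) (hyx : y ≠ x) {c : ℤ}
    (hwit : ∀ z ∈ S, z ≠ x → z ≠ y → χ x y z = c)
    (hA : ∃ z ∈ S, z ≠ x ∧ z ≠ y) :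
    ∃ w ∈ S, w ≠ x ∧ w ≠ y ∧ ∀ z ∈ S, z ≠ x → z ≠ w → χ x w z = -c := by
  classical
  have hs := hχ.1
  have htrax := hχ.2.2
  set A := S.filter (fun z => z ≠ x ∧ z ≠ y) with hAdef
  have hAmem : ∀ z ∈ A, z ∈ S ∧ z ≠ x ∧ z ≠ y := by
    intro z hz
    simpa [hAdef] using Finset.mem_filter.mp hz
  obtain ⟨z0, hz0S, hz0x, hz0y⟩ := hA
  have hAne : A.Nonempty := ⟨z0, Finset.mem_filter.mpr ⟨hz0S, hz0x, hz0y⟩⟩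
  have hc : c = 1 ∨ c = -1 := by
    have h1 := hwit z0 hz0S hz0x hz0y
    have h2 := sgn_pm hs hx hy hz0S hyx.symm hz0y.symm.symm.symm hz0x.symm
    rw [h1] at h2
    exact h2
  rcases hc with rfl | rfl
  · -- c = 1 : take the maximum of a ≺ b ↔ χ a b x = 1
    obtain ⟨m, hmA, hmax⟩ := exists_rel_max (fun a b => χ a b x = 1) A hAne
      (by
        intro a ha b hb hab
        obtain ⟨haS, hax, -⟩ := hAmem a ha
        obtain ⟨hbS, hbx, -⟩ := hAmem b hb
        rcases sgn_pm hs haS hbS hx hab hbx hax with h | h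
        · exact Or.inl h
        · right
          have hsw := sgn_swap12_s10 hs haS hbS hx hab hbx hax
          linarith)
      (by
        intro a ha b hb d hd hab hbd had rab rbd
        obtain ⟨haS, hax, hay⟩ := hAmem a ha
        obtain ⟨hbS, hbx, hby⟩ := hAmem b hb
        obtain ⟨hdS, hdx, hdy⟩ := hAmem d hd
        exact htrax y hy x hx a haS b hbS d hdS hyx hay.symm hby.symm hdy.symm
          hax.symm hbx.symm hdx.symm hab had hbd
          (hwit a haS hax hay) (hwit b hbS hbx hby) (hwit d hdS hdx hdy) rab rbd)
    obtain ⟨hmS, hmx, hmy⟩ := hAmem m hmA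
    refine ⟨m, hmS, hmx, hmy, ?_⟩
    intro z hzS hzx hzm
    by_cases hzy : z = y
    · subst hzy
      have h1 := hwit m hmS hmx hmy
      have hsw := sgn_swap23_s10 hs hx hy hmS hyx.symm hmy.symm.symm.symm hmx.symm
      linarith
    · have hr := hmax z (Finset.mem_filter.mpr ⟨hzS, hzx, hzy⟩) hzm
      have e := sgn_rot2 hs hzS hmS hx hzm hmx hzx
      have e2 := sgn_swap23_s10 hs hx hmS hzS hmx.symm hzm.symm.symm.symm hzx.symm
      linarith
  · -- c = -1 : take the maximum of a ≺ b ↔ χ b a x = 1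
    have hyx1 : ∀ z ∈ S, z ≠ x → z ≠ y → χ y x z = 1 := by
      intro z hzS hzx hzy
      have h1 := hwit z hzS hzx hzy
      have hsw := sgn_swap12_s10 hs hx hy hzS hyx.symm hzy.symm hzx.symm
      linarith
    obtain ⟨m, hmA, hmax⟩ := exists_rel_max (fun a b => χ b a x = 1) A hAne
      (by
        intro a ha b hb hab
        obtain ⟨haS, hax, -⟩ := hAmem a ha
        obtain ⟨hbS, hbx, -⟩ := hAmem b hb
        rcases sgn_pm hs haS hbS hx hab hbx hax with h | h
        · exact Or.inr h
        · left
          have hsw := sgn_swap12_s10 hs haS hbS hx hab hbx hax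
          linarith)
      (by
        intro a ha b hb d hd hab hbd had rab rbd
        obtain ⟨haS, hax, hay⟩ := hAmem a ha
        obtain ⟨hbS, hbx, hby⟩ := hAmem b hb
        obtain ⟨hdS, hdx, hdy⟩ := hAmem d hd
        by_contra hcon
        have hda : χ d a x = -1 := by
          rcases sgn_pm hs hdS haS hx had.symm hax hdx with h | h
          · exact absurd h hcon
          · exact h
        have had1 : χ a d x = 1 := by
          have hsw := sgn_swap12_s10 hs hdS haS hx had.symm hax hdx
          linarith
        exact noCycle hχ hx hy hbS haS hdS hyx.symm hbx.symm hax.symm hdx.symm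
          hby.symm hay.symm hdy.symm hab.symm hbd had
          (hyx1 b hbS hbx hby) (hyx1 a haS hax hay) (hyx1 d hdS hdx hdy)
          rab had1 rbd)
    obtain ⟨hmS, hmx, hmy⟩ := hAmem m hmA
    refine ⟨m, hmS, hmx, hmy, ?_⟩
    intro z hzS hzx hzm
    by_cases hzy : z = y
    · subst hzy
      have h1 := hwit m hmS hmx hmy
      have hsw := sgn_swap23_s10 hs hx hy hmS hyx.symm hmy.symm.symm.symm hmx.symm
      linarith
    · have hr := hmax z (Finset.mem_filter.mpr ⟨hzS, hzx, hzy⟩) hzm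
      have e := sgn_rot2 hs hmS hzS hx hzm.symm.symm.symm hzx hmx
      linarith


/-- A chirotope with a nontrivial bowtie decomposition
`χ = κ ⋈_{x*,y*} ξ` is convex iff both `κ` and `ξ` are convex. -/
theorem bowtie_convex_iff
    {T : Type*} [DecidableEq T] (κ ξ : T → T → T → ℤ)
    (X Y : Finset T) (xs ys : T)
    (hdisj : Disjoint X Y) (hxs : xs ∉ X ∪ Y) (hys : ys ∉ X ∪ Y) (hxy : xs ≠ ys)
    (hXcard : 2 ≤ X.card) (hYcard : 2 ≤ Y.card)
    (hκ : ChirotopeOn κ (insert xs X)) (hξ : ChirotopeOn ξ (insert ys Y))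
    (hx : ExtremeInOn κ (insert xs X) xs) (hy : ExtremeInOn ξ (insert ys Y) ys) :
    ConvexChirotopeOn (bowtie κ X xs ξ Y ys) (X ∪ Y) ↔
      ConvexChirotopeOn κ (insert xs X) ∧ ConvexChirotopeOn ξ (insert ys Y) := by
  classical
  have hxsX : xs ∉ X := fun h => hxs (Finset.mem_union_left Y h)
  have hysY : ys ∉ Y := fun h => hys (Finset.mem_union_right X h)
  have hXY : ∀ u ∈ X, u ∉ Y := fun u hu => Finset.disjoint_left.mp hdisj hu
  have hYX : ∀ u ∈ Y, u ∉ X := fun u hu => Finset.disjoint_right.mp hdisj hu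
  have hXne : X.Nonempty := Finset.card_pos.mp (by omega)
  have hYne : Y.Nonempty := Finset.card_pos.mp (by omega)
  constructor
  · intro hconv
    constructor
    · intro u hu
      rcases Finset.mem_insert.mp hu with rfl | huX
      · exact hx
      · obtain ⟨-, v, hv, hvu, c, hw⟩ := hconv u (Finset.mem_union_left Y huX)
        rcases Finset.mem_union.mp hv with hvX | hvY
        · refine ⟨hu, v, Finset.mem_insert_of_mem hvX, hvu, c, ?_⟩
          intro z hz hzu hzv
          rcases Finset.mem_insert.mp hz with rfl | hzX
          · obtain ⟨w0, hw0⟩ := hYne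
            have hw0u : w0 ≠ u := fun h => hYX w0 hw0 (h ▸ huX)
            have hw0v : w0 ≠ v := fun h => hYX w0 hw0 (h ▸ hvX)
            have := hw w0 (Finset.mem_union_right X hw0) hw0u hw0v
            rwa [bowtie_XXY huX hvX (hYX w0 hw0)] at this
          · have := hw z (Finset.mem_union_left Y hzX) hzu hzv
            rwa [bowtie_XXX huX hvX hzX] at this
        · refine ⟨hu, xs, Finset.mem_insert_self _ _, fun h => hxsX (h ▸ huX), c, ?_⟩
          intro z hz hzu hzxs
          rcases Finset.mem_insert.mp hz with rfl | hzX
          · exact absurd rfl hzxs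
          · have hzv : z ≠ v := fun h => hXY z hzX (h ▸ hvY)
            have := hw z (Finset.mem_union_left Y hzX) hzu hzv
            rwa [bowtie_XYX huX (hYX v hvY) hzX] at this
    · intro u hu
      rcases Finset.mem_insert.mp hu with rfl | huY
      · exact hy
      · obtain ⟨-, v, hv, hvu, c, hw⟩ := hconv u (Finset.mem_union_right X huY)
        rcases Finset.mem_union.mp hv with hvX | hvY
        · refine ⟨hu, ys, Finset.mem_insert_self _ _, fun h => hysY (h ▸ huY), c, ?_⟩
          intro z hz hzu hzys
          rcases Finset.mem_insert.mp hz with rfl | hzY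
          · exact absurd rfl hzys
          · have hzv : z ≠ v := fun h => hYX z hzY (h ▸ hvX)
            have := hw z (Finset.mem_union_right X hzY) hzu hzv
            rwa [bowtie_YXY (hYX u huY) hvX (hYX z hzY) huY (hXY v hvX) hzY] at this
        · refine ⟨hu, v, Finset.mem_insert_of_mem hvY, hvu, c, ?_⟩
          intro z hz hzu hzv
          rcases Finset.mem_insert.mp hz with rfl | hzY
          · obtain ⟨w0, hw0⟩ := hXne
            have hw0u : w0 ≠ u := fun h => hXY w0 hw0 (h ▸ huY)
            have hw0v : w0 ≠ v := fun h => hXY w0 hw0 (h ▸ hvY)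
            have := hw w0 (Finset.mem_union_left Y hw0) hw0u hw0v
            rwa [bowtie_YYX (hYX u huY) (hYX v hvY) hw0 huY hvY (hXY w0 hw0)] at this
          · have := hw z (Finset.mem_union_right X hzY) hzu hzv
            rwa [bowtie_YYY (hYX u huY) (hYX v hvY) (hYX z hzY) huY hvY hzY] at this
  · rintro ⟨hκc, hξc⟩ u hu
    rcases Finset.mem_union.mp hu with huX | huY
    · obtain ⟨-, v, hv, hvu, c, hw⟩ := hκc u (Finset.mem_insert_of_mem huX)
      have hxsu : xs ≠ u := fun h => hxsX (h ▸ huX)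
      rcases Finset.mem_insert.mp hv with hveq | hvX
      · rw [hveq] at hvu hw
        obtain ⟨z1, hz1X, hz1u⟩ := Finset.exists_mem_ne (s := X) (by omega) u
        have hA : ∃ z ∈ insert xs X, z ≠ u ∧ z ≠ xs :=
          ⟨z1, Finset.mem_insert_of_mem hz1X, hz1u, fun h => hxsX (h ▸ hz1X)⟩
        obtain ⟨w, hwS, hwu, hwxs, hw'⟩ := other_witness hκ
          (Finset.mem_insert_of_mem huX) (Finset.mem_insert_self xs X) hvu hw hA
        have hwX : w ∈ X := by
          rcases Finset.mem_insert.mp hwS with rfl | h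
          · exact absurd rfl hwxs
          · exact h
        refine ⟨hu, w, Finset.mem_union_left Y hwX, hwu, -c, ?_⟩
        intro z hz hzu hzw
        rcases Finset.mem_union.mp hz with hzX | hzY
        · rw [bowtie_XXX huX hwX hzX]
          exact hw' z (Finset.mem_insert_of_mem hzX) hzu hzw
        · rw [bowtie_XXY huX hwX (hYX z hzY)]
          exact hw' xs (Finset.mem_insert_self xs X) hxsu (Ne.symm hwxs)
      · refine ⟨hu, v, Finset.mem_union_left Y hvX, hvu, c, ?_⟩
        intro z hz hzu hzv
        rcases Finset.mem_union.mp hz with hzX | hzY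
        · rw [bowtie_XXX huX hvX hzX]
          exact hw z (Finset.mem_insert_of_mem hzX) hzu hzv
        · rw [bowtie_XXY huX hvX (hYX z hzY)]
          exact hw xs (Finset.mem_insert_self xs X) hxsu (fun h => hxsX (h ▸ hvX))
    · obtain ⟨-, v, hv, hvu, c, hw⟩ := hξc u (Finset.mem_insert_of_mem huY)
      have hysu : ys ≠ u := fun h => hysY (h ▸ huY)
      rcases Finset.mem_insert.mp hv with hveq | hvY
      · rw [hveq] at hvu hw
        obtain ⟨z1, hz1Y, hz1u⟩ := Finset.exists_mem_ne (s := Y) (by omega) u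
        have hA : ∃ z ∈ insert ys Y, z ≠ u ∧ z ≠ ys :=
          ⟨z1, Finset.mem_insert_of_mem hz1Y, hz1u, fun h => hysY (h ▸ hz1Y)⟩
        obtain ⟨w, hwS, hwu, hwys, hw'⟩ := other_witness hξ
          (Finset.mem_insert_of_mem huY) (Finset.mem_insert_self ys Y) hvu hw hA
        have hwY : w ∈ Y := by
          rcases Finset.mem_insert.mp hwS with rfl | h
          · exact absurd rfl hwys
          · exact h
        refine ⟨hu, w, Finset.mem_union_right X hwY, hwu, -c, ?_⟩
        intro z hz hzu hzw
        rcases Finset.mem_union.mp hz with hzX | hzY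
        · rw [bowtie_YYX (hYX u huY) (hYX w hwY) hzX huY hwY (hXY z hzX)]
          exact hw' ys (Finset.mem_insert_self ys Y) hysu (Ne.symm hwys)
        · rw [bowtie_YYY (hYX u huY) (hYX w hwY) (hYX z hzY) huY hwY hzY]
          exact hw' z (Finset.mem_insert_of_mem hzY) hzu hzw
      · refine ⟨hu, v, Finset.mem_union_right X hvY, hvu, c, ?_⟩
        intro z hz hzu hzv
        rcases Finset.mem_union.mp hz with hzX | hzY
        · rw [bowtie_YYX (hYX u huY) (hYX v hvY) hzX huY hvY (hXY z hzX)]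
          exact hw ys (Finset.mem_insert_self ys Y) hysu (fun h => hysY (h ▸ hvY))
        · rw [bowtie_YYY (hYX u huY) (hYX v hvY) (hYX z hzY) huY hvY hzY]
          exact hw z (Finset.mem_insert_of_mem hzY) hzu hzv
end
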